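/- Let A be a finitely generated free abelian group and let ω : A × A → ℤ be an antisymmetric ℤ-bilinear form. Let 𝒜̄ be the associated twisted algebra with product [γ]·[η] = i^{−ω(γ,η)}[γ+η], let 𝒜 be the quotient of 𝒜̄ by the two-sided ideal generated by the elements [2γ] − 1 for all γ ∈ A, and let π : 𝒜̄ → 𝒜 be the quotient map. Let S : A/2A → A be any set-theoretic section of the reduction map A → A/2A. Then the family (π([S(u)]))_{u ∈ A/2A} is a basis of 𝒜 as a complex vector space; in particular, any choice of representatives of the elements of A/2A yields a basis of 𝒜. -/

import Mathlib

/-- The twisted product on `𝒜̄`, the space of finitely supported functions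
`A → ℂ`: the bilinear extension of `[γ]·[η] = i^{−ω(γ,η)}[γ+η]`. -/
noncomputable def twistedMul {A : Type*} [AddCommGroup A]
    (ω : A →ₗ[ℤ] A →ₗ[ℤ] ℤ) (f g : A →₀ ℂ) : A →₀ ℂ :=
  f.sum fun γ a => g.sum fun η b =>
    Finsupp.single (γ + η) (a * b * Complex.I ^ (-(ω γ η)))

/-- The two-sided ideal of `𝒜̄` generated by the elements `[2γ] − [0]`
(`[0]` being the unit), as a ℂ-subspace of `A →₀ ℂ`: the span of all products
`a·([2γ]−[0])·b`. -/
noncomputable def twistedIdeal {A : Type*} [AddCommGroup A]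
    (ω : A →ₗ[ℤ] A →ₗ[ℤ] ℤ) : Submodule ℂ (A →₀ ℂ) :=
  Submodule.span ℂ { x | ∃ (a b : A →₀ ℂ) (γ : A),
    x = twistedMul ω (twistedMul ω a
      (Finsupp.single ((2 : ℤ) • γ) (1 : ℂ) - Finsupp.single 0 1)) b }

/-- The subgroup `2A` of doubled elements of an abelian group `A`. -/
def doubleSub (A : Type*) [AddCommGroup A] : AddSubgroup A :=
  (AddMonoidHom.mk' (fun a => (2 : ℤ) • a) (fun a b => smul_add (2 : ℤ) a b)).range

section Aux

variable {A : Type*} [AddCommGroup A] (ω : A →ₗ[ℤ] A →ₗ[ℤ] ℤ)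

lemma tm_single_single (α η : A) (x y : ℂ) :
    twistedMul ω (Finsupp.single α x) (Finsupp.single η y)
      = Finsupp.single (α + η) (x * y * Complex.I ^ (-(ω α η))) := by
  unfold twistedMul
  rw [Finsupp.sum_single_index (by simp), Finsupp.sum_single_index (by simp)]

lemma tm_zero_left (g : A →₀ ℂ) : twistedMul ω 0 g = 0 := by simp [twistedMul]

lemma tm_zero_right (f : A →₀ ℂ) : twistedMul ω f 0 = 0 := by simp [twistedMul]

lemma tm_add_left (f f' g : A →₀ ℂ) :
    twistedMul ω (f + f') g = twistedMul ω f g + twistedMul ω f' g := by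
  unfold twistedMul
  refine Finsupp.sum_add_index' (by simp) fun γ a a' => ?_
  rw [← Finsupp.sum_add]
  exact Finsupp.sum_congr fun η _ => by rw [add_mul, add_mul, Finsupp.single_add]

lemma tm_add_right (f g g' : A →₀ ℂ) :
    twistedMul ω f (g + g') = twistedMul ω f g + twistedMul ω f g' := by
  unfold twistedMul
  rw [← Finsupp.sum_add]
  refine Finsupp.sum_congr fun γ _ => ?_
  refine Finsupp.sum_add_index' (by simp) fun η b b' => ?_
  rw [mul_add, add_mul, Finsupp.single_add]

lemma tm_sub_left (f f' g : A →₀ ℂ) :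
    twistedMul ω (f - f') g = twistedMul ω f g - twistedMul ω f' g := by
  rw [eq_sub_iff_add_eq, ← tm_add_left]
  congr 1
  abel

lemma tm_sub_right (f g g' : A →₀ ℂ) :
    twistedMul ω f (g - g') = twistedMul ω f g - twistedMul ω f g' := by
  rw [eq_sub_iff_add_eq, ← tm_add_right]
  congr 1
  abel

lemma I_zpow_four_mul (k : ℤ) : Complex.I ^ (4 * k) = 1 := by
  rw [zpow_mul, show Complex.I ^ (4:ℤ) = 1 by
    rw [show (4:ℤ) = (4:ℕ) from rfl, zpow_natCast]
    simp [pow_succ, Complex.I_mul_I], one_zpow]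

lemma I_zpow_congr {m n : ℤ} (k : ℤ) (h : m = n + 4 * k) :
    Complex.I ^ m = Complex.I ^ n := by
  rw [h, zpow_add₀ Complex.I_ne_zero, I_zpow_four_mul, mul_one]

variable (S : A ⧸ doubleSub A → A)

lemma exists_diff (hS : ∀ u : A ⧸ doubleSub A, (QuotientAddGroup.mk (S u) : A ⧸ doubleSub A) = u) (δ : A) :
    ∃ d : A, (2:ℤ) • d = δ - S (QuotientAddGroup.mk δ) := by
  have h2 : δ - S (QuotientAddGroup.mk δ) ∈ doubleSub A := by
    rw [← QuotientAddGroup.eq_iff_sub_mem]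
    exact (hS _).symm
  obtain ⟨d, hd⟩ := AddMonoidHom.mem_range.mp h2
  exact ⟨d, hd⟩

variable (hS : ∀ u : A ⧸ doubleSub A, (QuotientAddGroup.mk (S u) : A ⧸ doubleSub A) = u)

noncomputable def secd (δ : A) : A := Classical.choose (exists_diff S hS δ)

lemma secd_spec (δ : A) :
    (2:ℤ) • secd S hS δ = δ - S (QuotientAddGroup.mk δ) :=
  Classical.choose_spec (exists_diff S hS δ)

lemma secd_eq [NoZeroSMulDivisors ℤ A] {δ d : A}
    (h : (2:ℤ) • d = δ - S (QuotientAddGroup.mk δ)) : d = secd S hS δ := by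
  apply smul_right_injective A (two_ne_zero (α := ℤ))
  show (2:ℤ) • d = (2:ℤ) • secd S hS δ
  rw [h, secd_spec]

/-- The correction sign. -/
noncomputable def cfun (δ : A) : ℂ :=
  Complex.I ^ (2 * ω (S (QuotientAddGroup.mk δ)) (secd S hS δ))

lemma mk_shift (δ γ : A) :
    (QuotientAddGroup.mk (δ + (2:ℤ) • γ) : A ⧸ doubleSub A) = QuotientAddGroup.mk δ := by
  rw [QuotientAddGroup.eq_iff_sub_mem]
  have h : δ + (2:ℤ) • γ - δ = (2:ℤ) • γ := by abel
  rw [h]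
  exact ⟨γ, rfl⟩

lemma cfun_shift [NoZeroSMulDivisors ℤ A] (δ γ : A) :
    cfun ω S hS (δ + (2:ℤ) • γ)
      = cfun ω S hS δ * Complex.I ^ (2 * ω (S (QuotientAddGroup.mk δ)) γ) := by
  have hm := mk_shift (A := A) δ γ
  have hd : secd S hS (δ + (2:ℤ) • γ) = secd S hS δ + γ := by
    refine (secd_eq S hS ?_).symm
    rw [hm, smul_add, secd_spec S hS δ]
    abel
  unfold cfun
  rw [hm, hd, map_add, mul_add, zpow_add₀ Complex.I_ne_zero]

lemma cfun_S [NoZeroSMulDivisors ℤ A] (u : A ⧸ doubleSub A) : cfun ω S hS (S u) = 1 := by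
  have h0 : secd S hS (S u) = 0 := by
    refine (secd_eq S hS ?_).symm
    rw [hS u]
    simp
  unfold cfun
  rw [h0, map_zero, mul_zero, zpow_zero]

/-- The comparison map `𝒜̄ → ℂ[A/2A]`, `[γ] ↦ c(γ)[γ̄]`. -/
noncomputable def phi : (A →₀ ℂ) →ₗ[ℂ] ((A ⧸ doubleSub A) →₀ ℂ) :=
  Finsupp.lsum ℂ fun γ => cfun ω S hS γ • Finsupp.lsingle (QuotientAddGroup.mk γ)

lemma phi_single (γ : A) (x : ℂ) :
    phi ω S hS (Finsupp.single γ x)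
      = Finsupp.single (QuotientAddGroup.mk γ) (cfun ω S hS γ * x) := by
  unfold phi
  rw [Finsupp.lsum_single]
  simp [Finsupp.smul_single, smul_eq_mul]

lemma phi_gen [NoZeroSMulDivisors ℤ A]
    (hanti : ∀ x y : A, ω x y = - ω y x) (a b : A →₀ ℂ) (γ : A) :
    phi ω S hS (twistedMul ω (twistedMul ω a
      (Finsupp.single ((2:ℤ) • γ) (1:ℂ) - Finsupp.single 0 1)) b) = 0 := by
  induction a using Finsupp.induction_linear with
  | zero => rw [tm_zero_left, tm_zero_left, map_zero]
  | add f g hf hg => rw [tm_add_left, tm_add_left, map_add, hf, hg, add_zero]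
  | single α x =>
    induction b using Finsupp.induction_linear with
    | zero => rw [tm_zero_right, map_zero]
    | add f g hf hg => rw [tm_add_right, map_add, hf, hg, add_zero]
    | single β y =>
      rw [tm_sub_right, tm_single_single, tm_single_single, tm_sub_left,
        tm_single_single, tm_single_single, map_sub, phi_single, phi_single]
      have hre : α + (2:ℤ) • γ + β = (α + β) + (2:ℤ) • γ := by abel
      rw [hre, add_zero, mk_shift, cfun_shift]
      rw [sub_eq_zero]
      congr 1
      -- scalar identity
      have h1 : ω α ((2:ℤ) • γ) = 2 * ω α γ := by
        rw [map_smul, smul_eq_mul]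
      have h2 : ω (α + (2:ℤ) • γ) β = ω α β + 2 * ω γ β := by
        rw [map_add, map_smul]
        simp [smul_eq_mul]
      rw [h1, h2, map_zero, neg_zero, zpow_zero]
      set s := S (QuotientAddGroup.mk (α + β)) with hs
      have hσ : (2:ℤ) • secd S hS (α + β) = α + β - s := secd_spec S hS (α + β)
      have h3 : ω s γ = ω α γ + ω β γ - 2 * ω (secd S hS (α + β)) γ := by
        have : s = α + β - (2:ℤ) • secd S hS (α + β) := by rw [hσ]; abel
        rw [this, map_sub, map_add, map_smul]
        simp [smul_eq_mul]
      have h4 : ω β γ = - ω γ β := hanti β γ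
      have key : Complex.I ^ (2 * ω s γ) * Complex.I ^ (-(2 * ω α γ))
          * Complex.I ^ (-(ω α β + 2 * ω γ β)) = Complex.I ^ (-(ω α β)) := by
        rw [← zpow_add₀ Complex.I_ne_zero, ← zpow_add₀ Complex.I_ne_zero]
        refine I_zpow_congr (-(ω γ β + ω (secd S hS (α + β)) γ)) ?_
        rw [h3, h4]
        ring
      linear_combination (cfun ω S hS (α + β) * x * y) * key

lemma ideal_le_ker [NoZeroSMulDivisors ℤ A]
    (hanti : ∀ x y : A, ω x y = - ω y x) :
    twistedIdeal ω ≤ LinearMap.ker (phi ω S hS) := by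
  rw [twistedIdeal, Submodule.span_le]
  rintro x ⟨a, b, γ, rfl⟩
  exact LinearMap.mem_ker.mpr (phi_gen ω S hS hanti a b γ)

end Aux

theorem stmt_10 (A : Type*) [AddCommGroup A] [Module.Free ℤ A] [Module.Finite ℤ A]
    (ω : A →ₗ[ℤ] A →ₗ[ℤ] ℤ)
    (hanti : ∀ x y : A, ω x y = - ω y x)
    (S : A ⧸ doubleSub A → A)
    (hS : ∀ u : A ⧸ doubleSub A, (QuotientAddGroup.mk (S u) : A ⧸ doubleSub A) = u) :
    LinearIndependent ℂ (fun u : A ⧸ doubleSub A =>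
        (twistedIdeal ω).mkQ (Finsupp.single (S u) (1 : ℂ))) ∧
    Submodule.span ℂ (Set.range (fun u : A ⧸ doubleSub A =>
        (twistedIdeal ω).mkQ (Finsupp.single (S u) (1 : ℂ)))) = ⊤ := by
  haveI : IsAddTorsionFree A := Module.isTorsionFree_int_iff_isAddTorsionFree.mp inferInstance
  constructor
  · -- linear independence
    have hle := ideal_le_ker ω S hS hanti
    set ψ := (twistedIdeal ω).liftQ (phi ω S hS) hle with hψ
    refine LinearIndependent.of_comp ψ ?_
    have hcomp : (⇑ψ ∘ fun u : A ⧸ doubleSub A =>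
        (twistedIdeal ω).mkQ (Finsupp.single (S u) (1:ℂ)))
        = fun u => Finsupp.single u (1:ℂ) := by
      funext u
      have h1 := LinearMap.congr_fun
        ((twistedIdeal ω).liftQ_mkQ (phi ω S hS) hle) (Finsupp.single (S u) (1:ℂ))
      simp only [Function.comp_apply, LinearMap.comp_apply] at h1 ⊢
      rw [hψ, h1, phi_single, cfun_S, one_mul, hS u]
    rw [hcomp]
    have hli := (Finsupp.basisSingleOne (R := ℂ) (ι := A ⧸ doubleSub A)).linearIndependent
    simpa [Finsupp.coe_basisSingleOne] using hli
  · -- spanning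
    have key : ∀ γ : A, (twistedIdeal ω).mkQ (Finsupp.single γ (1:ℂ)) ∈
        Submodule.span ℂ (Set.range (fun u : A ⧸ doubleSub A =>
          (twistedIdeal ω).mkQ (Finsupp.single (S u) (1 : ℂ)))) := by
      intro γ
      obtain ⟨d, hd⟩ := exists_diff S hS γ
      have hγ : S (QuotientAddGroup.mk γ) + (2:ℤ) • d = γ := by rw [hd]; abel
      set sγ := S (QuotientAddGroup.mk γ) with hsγ
      set n : ℤ := ω sγ ((2:ℤ) • d) with hn
      have hE : (Finsupp.single (sγ + (2:ℤ) • d) (Complex.I ^ (-n))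
          - Finsupp.single sγ (1:ℂ)) ∈ twistedIdeal ω := by
        apply Submodule.subset_span
        refine ⟨Finsupp.single sγ 1, Finsupp.single 0 1, d, ?_⟩
        rw [tm_sub_right, tm_single_single, tm_single_single, tm_sub_left,
          tm_single_single, tm_single_single]
        simp [hn]
      have h0 : (twistedIdeal ω).mkQ (Finsupp.single (sγ + (2:ℤ) • d) (Complex.I ^ (-n)))
          = (twistedIdeal ω).mkQ (Finsupp.single sγ (1:ℂ)) := by
        rw [← sub_eq_zero, ← map_sub]
        exact (Submodule.Quotient.mk_eq_zero _).mpr hE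
      have h1 : Finsupp.single γ (1:ℂ)
          = (Complex.I ^ n) • Finsupp.single (sγ + (2:ℤ) • d) (Complex.I ^ (-n)) := by
        rw [Finsupp.smul_single, hγ, smul_eq_mul, ← zpow_add₀ Complex.I_ne_zero]
        simp
      rw [h1, map_smul, h0]
      exact Submodule.smul_mem _ _ (Submodule.subset_span ⟨QuotientAddGroup.mk γ, rfl⟩)
    rw [eq_top_iff]
    rintro x -
    obtain ⟨y, rfl⟩ := (twistedIdeal ω).mkQ_surjective x
    induction y using Finsupp.induction_linear with
    | zero => simp
    | add f g hf hg => rw [map_add]; exact add_mem hf hg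
    | single a c =>
      have hc : Finsupp.single a c = c • Finsupp.single a (1:ℂ) := by
        rw [Finsupp.smul_single, smul_eq_mul, mul_one]
      rw [hc, map_smul]
      exact Submodule.smul_mem _ _ (key a)
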